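/- Let p be a pure Nash equilibrium of the pricing game with costs and let S = X(p). Then (1) v(S) - v(S\{i}) ≥ c_i for all i ∈ S, and (2) v(T∪{j}) + c(S\T) - c_j ≤ v(S) for all T ⊆ S and j ∉ S. Consequently v(S) - c(S) ≥ max over: v(S\{i}) - c(S\{i}), v(S∪{j}) - c(S∪{j}), and v(S∪{j}\{i}) - c(S∪{j}\{i}) for all i ∈ S, j ∉ S (i.e., S is a local optimum of v - c under single additions, deletions, and swaps). -/

import Mathlib

/-- Characterization of pure Nash equilibria of the pricing game
with costs: with `S = X p`, (1) `v(S) - v(S\{i}) ≥ c_i` for all `i ∈ S`,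
(2) `v(T ∪ {j}) + c(S \ T) - c_j ≤ v(S)` for all `T ⊆ S` and `j ∉ S`, and
consequently `S` is a local optimum of `v - c` under single deletions,
additions and swaps. -/
theorem stmt14 {n : ℕ} (v : Finset (Fin n) → ℝ)
    (hmono : ∀ S T : Finset (Fin n), S ⊆ T → v S ≤ v T)
    (hv0 : v ∅ = 0)
    (c : Fin n → ℝ) (hc : ∀ i, 0 ≤ c i)
    (X : (Fin n → ℝ) → Finset (Fin n))
    (hXd : ∀ q : Fin n → ℝ, (∀ i, 0 ≤ q i) → ∀ T : Finset (Fin n),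
      v T - ∑ i ∈ T, q i ≤ v (X q) - ∑ i ∈ X q, q i)
    (p : Fin n → ℝ) (hp : ∀ i, 0 ≤ p i)
    (hnash : ∀ i : Fin n, ∀ q : ℝ, 0 ≤ q →
      (if i ∈ X (Function.update p i q) then q - c i else 0) ≤
      (if i ∈ X p then p i - c i else 0)) :
    (∀ i ∈ X p, c i ≤ v (X p) - v ((X p).erase i)) ∧
    (∀ T ⊆ X p, ∀ j ∉ X p,
      v (insert j T) + ∑ i ∈ X p \ T, c i - c j ≤ v (X p)) ∧
    (∀ i ∈ X p, ∀ j ∉ X p,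
      (v ((X p).erase i) - ∑ k ∈ (X p).erase i, c k ≤ v (X p) - ∑ k ∈ X p, c k) ∧
      (v (insert j (X p)) - ∑ k ∈ insert j (X p), c k ≤ v (X p) - ∑ k ∈ X p, c k) ∧
      (v (insert j ((X p).erase i)) - ∑ k ∈ insert j ((X p).erase i), c k ≤
        v (X p) - ∑ k ∈ X p, c k)) := by
  set S := X p with hS
  -- every selected seller prices at least at cost
  have hAc : ∀ i ∈ S, c i ≤ p i := by
    intro i hi
    have h := hnash i (c i) (hc i)
    rw [if_pos hi] at h
    split_ifs at h <;> linarith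
  -- every selected seller prices at most its marginal value
  have hB : ∀ i ∈ S, p i ≤ v S - v (S.erase i) := by
    intro i hi
    have h := hXd p hp (S.erase i)
    have hsum := Finset.sum_erase_add S p hi
    rw [← hS] at h
    linarith
  have part1 : ∀ i ∈ S, c i ≤ v S - v (S.erase i) := by
    intro i hi; exact le_trans (hAc i hi) (hB i hi)
  -- key claim (2)
  have part2 : ∀ T ⊆ S, ∀ j ∉ S,
      v (insert j T) + ∑ i ∈ S \ T, c i - c j ≤ v S := by
    intro T hT j hj
    by_contra hcon
    push_neg at hcon
    set B := v (insert j T) + ∑ i ∈ S \ T, c i - v S with hB'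
    have hcjB : c j < B := by dsimp [B]; linarith
    set q : ℝ := (c j + B) / 2 with hq
    have hq1 : c j < q := by dsimp [q]; linarith
    have hq2 : q < B := by dsimp [q]; linarith
    have hq0 : 0 ≤ q := le_trans (hc j) hq1.le
    set p' : Fin n → ℝ := Function.update p j q with hp'def
    have hp' : ∀ k, 0 ≤ p' k := by
      intro k
      by_cases hk : k = j
      · subst hk; simp [p', hq0]
      · simp [p', Function.update_of_ne hk, hp k]
    have hjT : j ∉ T := fun h => hj (hT h)
    -- sums over j-free sets are unchanged
    have hsame : ∀ U : Finset (Fin n), j ∉ U → ∑ k ∈ U, p' k = ∑ k ∈ U, p k := by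
      intro U hU
      refine Finset.sum_congr rfl fun k hk => ?_
      have hkj : k ≠ j := fun h => hU (h ▸ hk)
      exact Function.update_of_ne hkj q p
    -- j must be in X p'
    have hjX : j ∈ X p' := by
      by_contra hjX
      have h1 := hXd p' hp' (insert j T)
      have h2 := hXd p hp (X p')
      rw [← hS] at h2
      rw [hsame (X p') hjX] at h1
      rw [Finset.sum_insert hjT, hsame T hjT] at h1
      have hsplit := Finset.sum_sdiff (f := p) hT
      have hcp : ∑ i ∈ S \ T, c i ≤ ∑ i ∈ S \ T, p i :=
        Finset.sum_le_sum fun i hi => hAc i (Finset.mem_sdiff.mp hi).1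
      have : p' j = q := Function.update_self j q p
      -- combine: v(insert j T) - q - ∑_T p ≤ v S - ∑_S p
      have hchain : v (insert j T) - (q + ∑ k ∈ T, p k) ≤ v S - ∑ k ∈ S, p k := by
        calc v (insert j T) - (q + ∑ k ∈ T, p k)
            = v (insert j T) - (p' j + ∑ k ∈ T, p k) := by rw [this]
          _ ≤ v (X p') - ∑ k ∈ X p', p k := h1
          _ ≤ v S - ∑ k ∈ S, p k := h2
      dsimp [B] at hq2
      linarith
    have hnj := hnash j q hq0
    rw [← hp'def, if_pos hjX, if_neg hj] at hnj
    linarith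
  refine ⟨part1, part2, ?_⟩
  intro i hi j hj
  have hce : ∑ k ∈ S.erase i, c k + c i = ∑ k ∈ S, c k := Finset.sum_erase_add S c hi
  refine ⟨by have := part1 i hi; linarith, ?_, ?_⟩
  · have h := part2 S (le_refl S) j hj
    rw [Finset.sdiff_self, Finset.sum_empty] at h
    rw [Finset.sum_insert hj]
    linarith
  · have h := part2 (S.erase i) (Finset.erase_subset i S) j hj
    have hsd : S \ S.erase i = {i} := by
      ext k
      simp only [Finset.mem_sdiff, Finset.mem_erase, Finset.mem_singleton]
      constructor
      · rintro ⟨hk, hk2⟩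
        by_contra hne
        exact hk2 ⟨hne, hk⟩
      · rintro rfl
        exact ⟨hi, fun h => h.1 rfl⟩
    rw [hsd, Finset.sum_singleton] at h
    have hji : j ∉ S.erase i := fun h => hj (Finset.erase_subset i S h)
    rw [Finset.sum_insert hji]
    linarith
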